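/- If T ∈ B(X) has decomposition property (δ) (i.e. the adjoint T* has Bishop's property (β)) and K ∈ B(X) is algebraic with TK = KT, then T + K has decomposition property (δ). -/

import Mathlib

open Filter Metric Polynomial

noncomputable section

variable {X : Type*} [NormedAddCommGroup X] [NormedSpace ℂ X]

/-- The commutator map `C(R,S)(A) = RA - AS`. -/
def commMap (R S : X →L[ℂ] X) : (X →L[ℂ] X) → (X →L[ℂ] X) := fun A => R ∘L A - A ∘L S

/-- Bishop's property (β) at a point `l0`. -/
def BishopBetaAt (T : X →L[ℂ] X) (l0 : ℂ) : Prop :=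
  ∃ v > (0 : ℝ), ∀ U : Set ℂ, IsOpen U → U ⊆ ball l0 v →
    ∀ f : ℕ → ℂ → X, (∀ n, AnalyticOnNhd ℂ (f n) U) →
      (∀ K ⊆ U, IsCompact K →
        TendstoUniformlyOn (fun n z => T (f n z) - z • f n z) 0 atTop K) →
      ∀ K ⊆ U, IsCompact K → TendstoUniformlyOn (fun n z => f n z) 0 atTop K

/-- The Banach-space dual (adjoint) operator `T*` acting on the dual space. -/
def dualOp (T : X →L[ℂ] X) : StrongDual ℂ X →L[ℂ] StrongDual ℂ X :=
  (ContinuousLinearMap.compL ℂ X X ℂ).flip T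

/-- Decomposition property (δ): the dual operator has Bishop's property (β) everywhere. -/
def DeltaProp (T : X →L[ℂ] X) : Prop := ∀ l : ℂ, BishopBetaAt (dualOp T) l

namespace Stmt14Aux

set_option linter.unusedSectionVars false

variable {Y : Type*} [NormedAddCommGroup Y] [NormedSpace ℂ Y]

/-- A sequence of functions vanishing on `s` tends uniformly to `0` on `s`. -/
lemma tuo_of_eq_zero {f : ℕ → ℂ → Y} {s : Set ℂ} (h : ∀ n, ∀ z ∈ s, f n z = 0) :
    TendstoUniformlyOn f 0 atTop s := by
  have h0 : TendstoUniformlyOn (fun (_ : ℕ) (_ : ℂ) => (0 : Y)) 0 atTop s :=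
    Filter.Tendsto.tendstoUniformlyOn_const tendsto_const_nhds s
  exact h0.congr (Eventually.of_forall fun n z hz => (h n z hz).symm)

/-- Applying a fixed continuous linear map preserves uniform convergence to `0`. -/
lemma tuo_clm (A : Y →L[ℂ] Y) {f : ℕ → ℂ → Y} {s : Set ℂ}
    (h : TendstoUniformlyOn f 0 atTop s) :
    TendstoUniformlyOn (fun n z => A (f n z)) 0 atTop s := by
  have h1 := A.uniformContinuous.comp_tendstoUniformlyOn h
  have h2 : (⇑A ∘ (0 : ℂ → Y)) = 0 := by funext z; simp
  rw [h2] at h1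
  exact h1

lemma tuo_zero_sub {f g : ℕ → ℂ → Y} {s : Set ℂ}
    (hf : TendstoUniformlyOn f 0 atTop s) (hg : TendstoUniformlyOn g 0 atTop s) :
    TendstoUniformlyOn (fun n z => f n z - g n z) 0 atTop s := by
  have := hf.sub hg
  have h' : TendstoUniformlyOn (f - g) 0 atTop s := by simpa using this
  exact h'

lemma tuo_zero_add {f g : ℕ → ℂ → Y} {s : Set ℂ}
    (hf : TendstoUniformlyOn f 0 atTop s) (hg : TendstoUniformlyOn g 0 atTop s) :
    TendstoUniformlyOn (fun n z => f n z + g n z) 0 atTop s := by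
  have := hf.add hg
  have h' : TendstoUniformlyOn (f + g) 0 atTop s := by simpa using this
  exact h'

/-- Shift lemma: property (β) translates. -/
lemma beta_shift {S : Y →L[ℂ] Y} {l0 c : ℂ} (h : BishopBetaAt S (l0 - c)) :
    BishopBetaAt (S + c • (1 : Y →L[ℂ] Y)) l0 := by
  obtain ⟨v, hv, hβ⟩ := h
  refine ⟨v, hv, ?_⟩
  intro U hU hUb f hf hconv Kc hKc hKcomp
  set U' : Set ℂ := (fun w => w + c) ⁻¹' U with hU'def
  have hU'open : IsOpen U' := hU.preimage (continuous_id.add continuous_const)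
  have hU'b : U' ⊆ ball (l0 - c) v := by
    intro w hw
    have : dist (w + c) l0 < v := hUb hw
    simpa [mem_ball, Complex.dist_eq, sub_sub] using this
  set f' : ℕ → ℂ → Y := fun n w => f n (w + c) with hf'def
  have hf'an : ∀ n, AnalyticOnNhd ℂ (f' n) U' := by
    intro n w hw
    have haff : AnalyticAt ℂ (fun w : ℂ => w + c) w := by
      exact (analyticAt_id (𝕜 := ℂ)).add analyticAt_const
    exact AnalyticAt.comp (g := f n) (f := fun w : ℂ => w + c) (x := w)
      (hf n (w + c) hw) haff
  have hconv' : ∀ Kc' ⊆ U', IsCompact Kc' →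
      TendstoUniformlyOn (fun n w => S (f' n w) - w • f' n w) 0 atTop Kc' := by
    intro Kc' hKc' hKc'comp
    have himsub : (fun w => w + c) '' Kc' ⊆ U := by
      rintro z ⟨w, hw, rfl⟩; exact hKc' hw
    have himcomp : IsCompact ((fun w => w + c) '' Kc') :=
      hKc'comp.image (continuous_id.add continuous_const)
    have h1 := hconv _ himsub himcomp
    have h2 := h1.comp (fun w => w + c)
    have h3 : Kc' ⊆ (fun w => w + c) ⁻¹' ((fun w => w + c) '' Kc') :=
      Set.subset_preimage_image _ _
    have h4 := h2.mono h3
    refine h4.congr (Eventually.of_forall fun n => fun w _ => ?_)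
    show (S + c • (1 : Y →L[ℂ] Y)) (f n (w + c)) - (w + c) • f n (w + c)
        = S (f' n w) - w • f' n w
    simp only [ContinuousLinearMap.add_apply, ContinuousLinearMap.smul_apply,
      ContinuousLinearMap.one_apply, hf'def, add_smul]
    abel
  have hres := hβ U' hU'open hU'b f' hf'an hconv'
  have hKc'sub : (fun z => z - c) '' Kc ⊆ U' := by
    rintro w ⟨z, hz, rfl⟩
    show z - c + c ∈ U
    simpa using hKc hz
  have hKc'comp : IsCompact ((fun z => z - c) '' Kc) :=
    hKcomp.image (continuous_id.sub continuous_const)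
  have h5 := hres _ hKc'sub hKc'comp
  have h6 := h5.comp (fun z => z - c)
  have h7 : Kc ⊆ (fun z => z - c) ⁻¹' ((fun z => z - c) '' Kc) :=
    Set.subset_preimage_image _ _
  have h8 := h6.mono h7
  refine h8.congr (Eventually.of_forall fun n => fun z _ => ?_)
  show f' n (z - c) = f n z
  simp [hf'def]

/-- Nilpotent perturbation step. -/
lemma nilpotent_step (S N : Y →L[ℂ] Y) (hSN : S * N = N * S) (m : ℕ)
    {l0 : ℂ} (hβS : BishopBetaAt S l0) :
    ∃ v > (0 : ℝ), ∀ U : Set ℂ, IsOpen U → U ⊆ ball l0 v →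
      ∀ f : ℕ → ℂ → Y, (∀ n, AnalyticOnNhd ℂ (f n) U) →
        (∀ n, ∀ z ∈ U, (N ^ m) (f n z) = 0) →
        (∀ Kc ⊆ U, IsCompact Kc →
          TendstoUniformlyOn (fun n z => (S + N) (f n z) - z • f n z) 0 atTop Kc) →
        ∀ Kc ⊆ U, IsCompact Kc → TendstoUniformlyOn (fun n z => f n z) 0 atTop Kc := by
  obtain ⟨v, hv, hβ⟩ := hβS
  refine ⟨v, hv, ?_⟩
  intro U hU hUb f hf hzero hconv
  have hSNj : ∀ j : ℕ, S * N ^ j = N ^ j * S := by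
    intro j
    induction j with
    | zero => simp
    | succ j ih => rw [pow_succ, ← mul_assoc, ih, mul_assoc, hSN, ← mul_assoc]
  have main : ∀ i : ℕ, ∀ Kc ⊆ U, IsCompact Kc →
      TendstoUniformlyOn (fun n z => (N ^ (m - i)) (f n z)) 0 atTop Kc := by
    intro i
    induction i with
    | zero =>
      intro Kc hKc hKcomp
      apply tuo_of_eq_zero
      intro n z hz
      simpa using hzero n z (hKc hz)
    | succ i ih =>
      by_cases him : m ≤ i
      · have he : m - (i + 1) = m - i := by omega
        rw [he]; exact ih
      · have hji : m - i = (m - (i + 1)) + 1 := by omega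
        set j := m - (i + 1) with hj
        have hgan : ∀ n, AnalyticOnNhd ℂ (fun z => (N ^ j) (f n z)) U := by
          intro n
          exact (N ^ j).comp_analyticOnNhd (hf n)
        have hgconv : ∀ Kc ⊆ U, IsCompact Kc →
            TendstoUniformlyOn
              (fun n z => S ((N ^ j) (f n z)) - z • (N ^ j) (f n z)) 0 atTop Kc := by
          intro Kc hKc hKcomp
          have h1 := tuo_clm (N ^ j) (hconv Kc hKc hKcomp)
          have h2 := ih Kc hKc hKcomp
          rw [hji] at h2
          have h3 := tuo_zero_sub h1 h2
          refine h3.congr (Eventually.of_forall fun n => fun z _ => ?_)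
          have hcomm : (N ^ j) (S (f n z)) = S ((N ^ j) (f n z)) := by
            have := congrArg (fun (A : Y →L[ℂ] Y) => A (f n z)) (hSNj j)
            simpa [ContinuousLinearMap.mul_apply] using this.symm
          simp only [ContinuousLinearMap.add_apply, map_sub, map_add, map_smul,
            pow_succ, ContinuousLinearMap.mul_apply, hcomm]
          have : (N ^ j) (N (f n z)) = N ((N ^ j) (f n z)) := by
            have := congrArg (fun (A : Y →L[ℂ] Y) => A (f n z)) (pow_mul_comm' N j)
            simpa [ContinuousLinearMap.mul_apply] using this
          rw [this]
          abel
        exact hβ U hU hUb _ hgan hgconv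
  intro Kc hKc hKcomp
  have h := main m Kc hKc hKcomp
  simp only [Nat.sub_self, pow_zero, ContinuousLinearMap.one_apply] at h
  exact h

lemma mul_aeval_comm {A M : Y →L[ℂ] Y} (hAM : A * M = M * A) (s : Polynomial ℂ) :
    A * aeval M s = aeval M s * A := by
  induction s using Polynomial.induction_on' with
  | add p q hp hq => simp [map_add, mul_add, add_mul, hp, hq]
  | monomial n a =>
    have hpow : ∀ k : ℕ, A * M ^ k = M ^ k * A := by
      intro k; induction k with
      | zero => simp
      | succ k ih => rw [pow_succ, ← mul_assoc, ih, mul_assoc, hAM, ← mul_assoc]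
    rw [aeval_monomial]
    calc A * (algebraMap ℂ _ a * M ^ n) = algebraMap ℂ _ a * (A * M ^ n) := by
          rw [← mul_assoc, ← Algebra.commutes, mul_assoc]
      _ = algebraMap ℂ _ a * M ^ n * A := by rw [hpow, mul_assoc]

lemma key_const (S M : Y →L[ℂ] Y) {q : Polynomial ℂ} (hq : q ≠ 0) (hd : q.natDegree = 0) :
    ∀ l0 : ℂ, ∃ v > (0 : ℝ), ∀ U : Set ℂ, IsOpen U → U ⊆ ball l0 v →
      ∀ f : ℕ → ℂ → Y, (∀ n, AnalyticOnNhd ℂ (f n) U) →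
        (∀ n, ∀ z ∈ U, (aeval M q) (f n z) = 0) →
        (∀ Kc ⊆ U, IsCompact Kc →
          TendstoUniformlyOn (fun n z => (S + M) (f n z) - z • f n z) 0 atTop Kc) →
        ∀ Kc ⊆ U, IsCompact Kc → TendstoUniformlyOn (fun n z => f n z) 0 atTop Kc := by
  intro l0
  refine ⟨1, one_pos, ?_⟩
  intro U hU hUb f hf hq0 hconv Kc hKc hKcomp
  have hqc := Polynomial.eq_C_of_natDegree_eq_zero hd
  have hc : q.coeff 0 ≠ 0 := fun h => hq (by rw [hqc, h, map_zero])
  apply tuo_of_eq_zero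
  intro n z hz
  have h1 := hq0 n z (hKc hz)
  rw [hqc, aeval_C, Algebra.algebraMap_eq_smul_one] at h1
  rw [ContinuousLinearMap.smul_apply, ContinuousLinearMap.one_apply] at h1
  exact (smul_eq_zero.mp h1).resolve_left hc

lemma key (S M : Y →L[ℂ] Y) (hS : ∀ l : ℂ, BishopBetaAt S l) (hSM : S * M = M * S) :
    ∀ d : ℕ, ∀ q : Polynomial ℂ, q ≠ 0 → q.natDegree ≤ d → ∀ l0 : ℂ,
      ∃ v > (0 : ℝ), ∀ U : Set ℂ, IsOpen U → U ⊆ ball l0 v →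
        ∀ f : ℕ → ℂ → Y, (∀ n, AnalyticOnNhd ℂ (f n) U) →
          (∀ n, ∀ z ∈ U, (aeval M q) (f n z) = 0) →
          (∀ Kc ⊆ U, IsCompact Kc →
            TendstoUniformlyOn (fun n z => (S + M) (f n z) - z • f n z) 0 atTop Kc) →
          ∀ Kc ⊆ U, IsCompact Kc → TendstoUniformlyOn (fun n z => f n z) 0 atTop Kc := by
  intro d
  induction d with
  | zero =>
    intro q hq hqd l0
    exact key_const S M hq (Nat.le_zero.mp hqd) l0
  | succ d ihd =>
    intro q hq hqd l0
    by_cases hdeg : q.natDegree = 0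
    · exact key_const S M hq hdeg l0
    · have hdegpos : 0 < q.degree := natDegree_pos_iff_degree_pos.mp (Nat.pos_of_ne_zero hdeg)
      obtain ⟨c, hroot⟩ := Complex.exists_root hdegpos
      set m := q.rootMultiplicity c with hm
      have hmpos : 0 < m := (rootMultiplicity_pos hq).mpr hroot
      obtain ⟨r, hqf, hrdvd⟩ := q.exists_eq_pow_rootMultiplicity_mul_and_not_dvd hq c
      have hr0 : r ≠ 0 := by
        rintro rfl
        exact hq (by rw [hqf, mul_zero])
      have hdegq : q.natDegree = m + r.natDegree := by
        rw [hqf, natDegree_mul (pow_ne_zero _ (X_sub_C_ne_zero c)) hr0, natDegree_pow,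
          natDegree_X_sub_C, mul_one]
      have hrd : r.natDegree ≤ d := by omega
      have hco : IsCoprime ((X - C c) ^ m) r :=
        ((irreducible_X_sub_C c).coprime_iff_not_dvd.mpr hrdvd).pow_left
      obtain ⟨a, b, hab⟩ := hco
      obtain ⟨v1, hv1, H1⟩ := ihd r hr0 hrd l0
      have hβ' : BishopBetaAt (S + c • (1 : Y →L[ℂ] Y)) l0 := beta_shift (hS (l0 - c))
      have hcommN : (S + c • (1 : Y →L[ℂ] Y)) * (M - c • 1) =
          (M - c • 1) * (S + c • (1 : Y →L[ℂ] Y)) := by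
        simp only [add_mul, mul_add, sub_mul, mul_sub, smul_mul_assoc, mul_smul_comm,
          one_mul, mul_one, smul_sub, smul_add, smul_smul, hSM]
        module
      obtain ⟨v2, hv2, H2⟩ :=
        nilpotent_step (S + c • (1 : Y →L[ℂ] Y)) (M - c • 1) hcommN m hβ'
      have hSN : S + c • (1 : Y →L[ℂ] Y) + (M - c • 1) = S + M := by abel
      refine ⟨min v1 v2, lt_min hv1 hv2, ?_⟩
      intro U hU hUb f hf hq0 hconv
      have hUb1 : U ⊆ ball l0 v1 := hUb.trans (ball_subset_ball (min_le_left _ _))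
      have hUb2 : U ⊆ ball l0 v2 := hUb.trans (ball_subset_ball (min_le_right _ _))
      set P := aeval M (b * r) with hP
      set Q := aeval M (a * (X - C c) ^ m) with hQ
      have hPcomm : (S + M) * P = P * (S + M) := by
        have h1 := mul_aeval_comm hSM (b * r)
        have h2 := mul_aeval_comm (rfl : M * M = M * M) (b * r)
        simp only [hP, add_mul, mul_add, h1, h2]
      have hQcomm : (S + M) * Q = Q * (S + M) := by
        have h1 := mul_aeval_comm hSM (a * (X - C c) ^ m)
        have h2 := mul_aeval_comm (rfl : M * M = M * M) (a * (X - C c) ^ m)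
        simp only [hQ, add_mul, mul_add, h1, h2]
      have hNC : M - c • (1 : Y →L[ℂ] Y) = aeval M (X - C c) := by
        rw [map_sub, aeval_X, aeval_C, Algebra.algebraMap_eq_smul_one]
      -- the "nilpotent" component g = P ∘ f
      have hg_an : ∀ n, AnalyticOnNhd ℂ (fun z => P (f n z)) U :=
        fun n => P.comp_analyticOnNhd (hf n)
      have hg_nil : ∀ n, ∀ z ∈ U, ((M - c • (1 : Y →L[ℂ] Y)) ^ m) (P (f n z)) = 0 := by
        intro n z hz
        have hmul : (M - c • (1 : Y →L[ℂ] Y)) ^ m * P = aeval M b * aeval M q := by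
          rw [hNC, hP, ← map_pow, ← map_mul, ← map_mul]
          congr 1
          rw [hqf]; ring
        have h4 := congrArg (fun (A : Y →L[ℂ] Y) => A (f n z)) hmul
        simp only [ContinuousLinearMap.mul_apply] at h4
        rw [h4, hq0 n z hz, map_zero]
      have hg_conv : ∀ Kc ⊆ U, IsCompact Kc →
          TendstoUniformlyOn
            (fun n z => (S + c • (1 : Y →L[ℂ] Y) + (M - c • 1)) (P (f n z)) - z • P (f n z))
            0 atTop Kc := by
        intro Kc hKc hKcomp
        have h1 := tuo_clm P (hconv Kc hKc hKcomp)
        refine h1.congr (Eventually.of_forall fun n z hz => ?_)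
        rw [hSN]
        have h5 := congrArg (fun (A : Y →L[ℂ] Y) => A (f n z)) hPcomm
        simp only [ContinuousLinearMap.mul_apply] at h5
        show P ((S + M) (f n z) - z • f n z) = (S + M) (P (f n z)) - z • P (f n z)
        rw [map_sub, map_smul, ← h5]
      have h_g := H2 U hU hUb2 (fun n z => P (f n z)) hg_an hg_nil hg_conv
      -- the component h = Q ∘ f, annihilated by r
      have hh_an : ∀ n, AnalyticOnNhd ℂ (fun z => Q (f n z)) U :=
        fun n => Q.comp_analyticOnNhd (hf n)
      have hh_q : ∀ n, ∀ z ∈ U, (aeval M r) (Q (f n z)) = 0 := by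
        intro n z hz
        have hmul : aeval M r * Q = aeval M a * aeval M q := by
          rw [hQ, ← map_mul, ← map_mul]
          congr 1
          rw [hqf]; ring
        have h4 := congrArg (fun (A : Y →L[ℂ] Y) => A (f n z)) hmul
        simp only [ContinuousLinearMap.mul_apply] at h4
        rw [h4, hq0 n z hz, map_zero]
      have hh_conv : ∀ Kc ⊆ U, IsCompact Kc →
          TendstoUniformlyOn (fun n z => (S + M) (Q (f n z)) - z • Q (f n z)) 0 atTop Kc := by
        intro Kc hKc hKcomp
        have h1 := tuo_clm Q (hconv Kc hKc hKcomp)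
        refine h1.congr (Eventually.of_forall fun n z hz => ?_)
        have h5 := congrArg (fun (A : Y →L[ℂ] Y) => A (f n z)) hQcomm
        simp only [ContinuousLinearMap.mul_apply] at h5
        show Q ((S + M) (f n z) - z • f n z) = (S + M) (Q (f n z)) - z • Q (f n z)
        rw [map_sub, map_smul, ← h5]
      have h_h := H1 U hU hUb1 (fun n z => Q (f n z)) hh_an hh_q hh_conv
      intro Kc hKc hKcomp
      have hsum := tuo_zero_add (h_g Kc hKc hKcomp) (h_h Kc hKc hKcomp)
      refine hsum.congr (Eventually.of_forall fun n z hz => ?_)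
      have hone : P + Q = 1 := by
        rw [hP, hQ, ← map_add]
        rw [show b * r + a * (X - C c) ^ m = 1 by linear_combination hab]
        exact map_one _
      have h4 := congrArg (fun (A : Y →L[ℂ] Y) => A (f n z)) hone
      simpa [ContinuousLinearMap.add_apply] using h4

end Stmt14Aux

namespace Stmt14Aux

lemma dualOp_mul (A B : X →L[ℂ] X) : dualOp (A * B) = dualOp B * dualOp A := by
  ext φ x
  rfl

set_option synthInstance.maxHeartbeats 200000 in
lemma dualOp_pow (Kop : X →L[ℂ] X) (n : ℕ) : dualOp (Kop ^ n) = dualOp Kop ^ n := by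
  induction n with
  | zero =>
    ext φ x; rfl
  | succ n ih =>
    rw [pow_succ, dualOp_mul, ih, pow_succ']

lemma dualOp_aeval (Kop : X →L[ℂ] X) (p : Polynomial ℂ) :
    aeval (dualOp Kop) p = (ContinuousLinearMap.compL ℂ X X ℂ).flip (aeval Kop p) := by
  rw [aeval_eq_sum_range, aeval_eq_sum_range, map_sum]
  refine Finset.sum_congr rfl fun i _ => ?_
  rw [map_smul, ← dualOp_pow]
  rfl

end Stmt14Aux

theorem stmt14 [CompleteSpace X] (T K : X →L[ℂ] X) (p : Polynomial ℂ)
    (hδ : DeltaProp T) (hp : p ≠ 0) (hpK : aeval K p = 0) (hcomm : T * K = K * T) :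
    DeltaProp (T + K) := by
  intro l
  have hadd : dualOp (T + K) = dualOp T + dualOp K := by
    unfold dualOp; exact map_add _ T K
  have hSM : dualOp T * dualOp K = dualOp K * dualOp T := by
    rw [← Stmt14Aux.dualOp_mul K T, ← Stmt14Aux.dualOp_mul T K, hcomm]
  have haeval : aeval (dualOp K) p = 0 := by
    rw [Stmt14Aux.dualOp_aeval, hpK, map_zero]
  obtain ⟨v, hv, H⟩ := Stmt14Aux.key (dualOp T) (dualOp K) hδ hSM p.natDegree p hp le_rfl l
  refine ⟨v, hv, ?_⟩
  intro U hU hUb f hf hconv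
  have hq0 : ∀ n, ∀ z ∈ U, (aeval (dualOp K) p) (f n z) = 0 := by
    intro n z _
    rw [haeval]; rfl
  have hconv' : ∀ Kc ⊆ U, IsCompact Kc →
      TendstoUniformlyOn (fun n z => (dualOp T + dualOp K) (f n z) - z • f n z) 0 atTop Kc := by
    intro Kc hKc hKcomp
    refine (hconv Kc hKc hKcomp).congr (Eventually.of_forall fun n z hz => ?_)
    rw [hadd]
  exact H U hU hUb f hf hq0 hconv'
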